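/- Let ε > 0 and let ψ : [a,b] → ℂ be continuous with ‖ψ‖_∞ ≤ ε². Suppose Z_a, W_a, Ẑ ∈ ℂ satisfy Z_a W_a = ψ(a), |Z_a|, |W_a| ≤ ε, and Ẑ² = ψ(b). Then there exist continuous Z₁, Z₂ : [a,b] → ℂ with Z₁(a) = Z_a, Z₂(a) = W_a, Z₁(b) = Z₂(b) = Ẑ, and |Z₁(t)|, |Z₂(t)| ≤ ε and Z₁(t)Z₂(t) = ψ(t) for all t. -/

import Mathlib

open Complex Set

lemma key_fact (a b : ℝ) (hab : a < b) (ε : ℝ) (hε : 0 < ε) (ψ : ℝ → ℂ)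
    (hψc : ContinuousOn ψ (Set.Icc a b))
    (hψb : ∀ t ∈ Set.Icc a b, ‖ψ t‖ ≤ ε ^ 2)
    (Za Wa Zhat : ℂ)
    (hfa : Za * Wa = ψ a) (hZa : ‖Za‖ ≤ ε)
    (hWa : ‖Wa‖ ≤ ‖Za‖)
    (hZhat : Zhat ^ 2 = ψ b) :
    ∃ Z₁ Z₂ : ℝ → ℂ, ContinuousOn Z₁ (Set.Icc a b) ∧ ContinuousOn Z₂ (Set.Icc a b) ∧
      Z₁ a = Za ∧ Z₂ a = Wa ∧ Z₁ b = Zhat ∧ Z₂ b = Zhat ∧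
      (∀ t ∈ Set.Icc a b, ‖Z₁ t‖ ≤ ε ∧ ‖Z₂ t‖ ≤ ε ∧
        Z₁ t * Z₂ t = ψ t) := by
  set m : ℝ := (a + b) / 2 with hm
  have ham : a < m := by simp only [hm]; linarith
  have hmb : m < b := by simp only [hm]; linarith
  have hma : (0:ℝ) < m - a := by linarith
  have hbm : (0:ℝ) < b - m := by linarith
  set ρ : ℝ := ‖Zhat‖ with hρ
  set θ : ℝ := Complex.arg Zhat with hθ
  set α : ℝ := Complex.arg Za with hα
  set rZ : ℝ := ‖Za‖ with hrZ
  have hρε : ρ ≤ ε := by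
    have h1 : ρ ^ 2 ≤ ε ^ 2 := by
      have : ρ ^ 2 = ‖ψ b‖ := by rw [hρ, ← norm_pow, hZhat]
      rw [this]; exact hψb b ⟨hab.le, le_rfl⟩
    nlinarith [norm_nonneg Zhat]
  set ℓ : ℝ → ℝ := fun t =>
    if t ≤ m then (rZ * (m - t) + ε * (t - a)) / (m - a)
    else (ε * (b - t) + ρ * (t - m)) / (b - m) with hℓ
  have hℓcont : Continuous ℓ := by
    apply Continuous.if_le
    · fun_prop
    · fun_prop
    · exact continuous_id
    · exact continuous_const
    · intro x hx
      rw [hx]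
      field_simp
      ring
  have hℓa : ℓ a = rZ := by
    simp only [hℓ, if_pos ham.le]
    field_simp
    ring
  have hℓb : ℓ b = ρ := by
    simp only [hℓ, if_neg (not_le.mpr hmb)]
    field_simp
    ring
  have hℓle : ∀ t ∈ Set.Icc a b, ℓ t ≤ ε := by
    intro t ht
    simp only [hℓ]
    split_ifs with h
    · rw [div_le_iff₀ hma]
      nlinarith [ht.1, norm_nonneg Za]
    · push_neg at h
      rw [div_le_iff₀ hbm]
      nlinarith [ht.2, norm_nonneg Zhat]
  set φ : ℝ → ℝ := fun t =>
    if t ≤ m then α * (m - t) / (m - a) else θ * (t - m) / (b - m) with hφ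
  have hφcont : Continuous φ := by
    apply Continuous.if_le
    · fun_prop
    · fun_prop
    · exact continuous_id
    · exact continuous_const
    · intro x hx; rw [hx]; field_simp; ring
  have hφa : φ a = α := by
    simp only [hφ, if_pos ham.le]
    field_simp
  have hφb : φ b = θ := by
    simp only [hφ, if_neg (not_le.mpr hmb)]
    field_simp
  set N : ℝ → ℝ := fun t => max (ℓ t) (Real.sqrt (‖ψ t‖)) with hN
  have hNcont : ContinuousOn N (Set.Icc a b) :=
    hℓcont.continuousOn.sup
      (Real.continuous_sqrt.comp_continuousOn (continuous_norm.comp_continuousOn hψc))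
  have hNnonneg : ∀ t, 0 ≤ N t := fun t =>
    le_trans (Real.sqrt_nonneg _) (le_max_right _ _)
  have hNge : ∀ t, Real.sqrt (‖ψ t‖) ≤ N t := fun t => le_max_right _ _
  have hNle : ∀ t ∈ Set.Icc a b, N t ≤ ε := by
    intro t ht
    apply max_le (hℓle t ht)
    calc Real.sqrt (‖ψ t‖) ≤ Real.sqrt (ε ^ 2) :=
          Real.sqrt_le_sqrt (hψb t ht)
      _ = ε := by rw [Real.sqrt_sq hε.le]
  have hNa : N a = rZ := by
    rw [hN]
    simp only
    rw [hℓa, max_eq_left]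
    have h1 : ‖ψ a‖ ≤ rZ ^ 2 := by
      rw [← hfa, norm_mul]
      nlinarith [norm_nonneg Wa, norm_nonneg Za]
    calc Real.sqrt (‖ψ a‖) ≤ Real.sqrt (rZ ^ 2) := Real.sqrt_le_sqrt h1
      _ = rZ := Real.sqrt_sq (norm_nonneg Za)
  have hNb : N b = ρ := by
    rw [hN]
    simp only
    rw [hℓb]
    have : ‖ψ b‖ = ρ ^ 2 := by rw [← hZhat, norm_pow]
    rw [this, Real.sqrt_sq (norm_nonneg Zhat), max_self]
  set Z₁ : ℝ → ℂ := fun t => (N t : ℂ) * Complex.exp ((φ t : ℝ) * Complex.I) with hZ₁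
  have hZ₁cont : ContinuousOn Z₁ (Set.Icc a b) := by
    apply ContinuousOn.mul
    · exact Complex.continuous_ofReal.comp_continuousOn hNcont
    · apply Continuous.continuousOn
      fun_prop
  have habsZ₁ : ∀ t, ‖Z₁ t‖ = N t := by
    intro t
    rw [hZ₁]
    simp only
    rw [norm_mul, Complex.norm_exp_ofReal_mul_I, mul_one, Complex.norm_real, Real.norm_eq_abs,
      _root_.abs_of_nonneg (hNnonneg t)]
  have hZ₁a : Z₁ a = Za := by
    rw [hZ₁]; simp only
    rw [hNa, hφa, hrZ, hα]
    exact Complex.norm_mul_exp_arg_mul_I Za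
  have hZ₁b : Z₁ b = Zhat := by
    rw [hZ₁]; simp only
    rw [hNb, hφb, hρ, hθ]
    exact Complex.norm_mul_exp_arg_mul_I Zhat
  have hZ₁ne : ∀ t, ψ t ≠ 0 → Z₁ t ≠ 0 := by
    intro t hψt
    have h1 : (0:ℝ) < N t := by
      calc (0:ℝ) < Real.sqrt (‖ψ t‖) :=
            Real.sqrt_pos.mpr (norm_pos_iff.mpr hψt)
        _ ≤ N t := hNge t
    apply mul_ne_zero
    · exact_mod_cast h1.ne'
    · exact Complex.exp_ne_zero _
  set Z₂ : ℝ → ℂ := fun t => if ψ t = 0 then 0 else ψ t / Z₁ t with hZ₂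
  have hZ₂bound : ∀ t, ‖Z₂ t‖ ≤ Real.sqrt (‖ψ t‖) := by
    intro t
    rw [hZ₂]
    simp only
    split_ifs with h
    · simp [Real.sqrt_nonneg]
    · rw [norm_div, habsZ₁]
      have hs : 0 < Real.sqrt (‖ψ t‖) := Real.sqrt_pos.mpr (norm_pos_iff.mpr h)
      calc ‖ψ t‖ / N t ≤ ‖ψ t‖ / Real.sqrt (‖ψ t‖) :=
            div_le_div_of_nonneg_left (norm_nonneg _) hs (hNge t)
        _ = Real.sqrt (‖ψ t‖) := Real.div_sqrt
  have hZ₂cont : ContinuousOn Z₂ (Set.Icc a b) := by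
    intro t ht
    by_cases hψt : ψ t = 0
    · have hZ₂t : Z₂ t = 0 := by simp [hZ₂, hψt]
      rw [ContinuousWithinAt, hZ₂t]
      apply squeeze_zero_norm (fun s => (hZ₂bound s).trans_eq rfl)
      have : ContinuousWithinAt (fun s => Real.sqrt (‖ψ s‖)) (Set.Icc a b) t :=
        Real.continuous_sqrt.continuousAt.comp_continuousWithinAt
          (continuous_norm.continuousAt.comp_continuousWithinAt (hψc t ht))
      have h0 : Real.sqrt (‖ψ t‖) = 0 := by simp [hψt]
      rw [ContinuousWithinAt, h0] at this
      exact this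
    · have hev : ∀ᶠ s in nhdsWithin t (Set.Icc a b), Z₂ s = ψ s / Z₁ s := by
        filter_upwards [(hψc t ht).eventually_ne hψt] with s hs
        simp [hZ₂, hs]
      have hc : ContinuousWithinAt (fun s => ψ s / Z₁ s) (Set.Icc a b) t :=
        (hψc t ht).div (hZ₁cont t ht) (hZ₁ne t hψt)
      apply hc.congr_of_eventuallyEq hev
      simp [hZ₂, hψt]
  have hZ₂a : Z₂ a = Wa := by
    rw [hZ₂]
    simp only
    by_cases h : ψ a = 0
    · rw [if_pos h]
      rcases mul_eq_zero.mp (hfa.trans h) with h1 | h1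
      · have : ‖Wa‖ ≤ 0 := by rw [hrZ, h1] at hWa; simpa using hWa
        have := le_antisymm this (norm_nonneg Wa)
        exact (norm_eq_zero.mp this).symm
      · exact h1.symm
    · rw [if_neg h, hZ₁a]
      have hZane : Za ≠ 0 := by
        intro h0
        rw [h0, zero_mul] at hfa
        exact h hfa.symm
      rw [← hfa, mul_div_cancel_left₀ _ hZane]
  have hZ₂b : Z₂ b = Zhat := by
    rw [hZ₂]
    simp only
    by_cases h : ψ b = 0
    · rw [if_pos h]
      have : Zhat = 0 := by
        have := hZhat.trans h
        exact pow_eq_zero_iff (n := 2) (by norm_num) |>.mp this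
      exact this.symm
    · rw [if_neg h, hZ₁b, ← hZhat]
      have hZne : Zhat ≠ 0 := by
        intro h0; rw [h0] at hZhat; simp at hZhat; exact h hZhat.symm
      rw [sq, mul_div_assoc, div_self hZne, mul_one]
  refine ⟨Z₁, Z₂, hZ₁cont, hZ₂cont, hZ₁a, hZ₂a, hZ₁b, hZ₂b, ?_⟩
  intro t ht
  refine ⟨by rw [habsZ₁]; exact hNle t ht, ?_, ?_⟩
  · calc ‖Z₂ t‖ ≤ Real.sqrt (‖ψ t‖) := hZ₂bound t
      _ ≤ Real.sqrt (ε ^ 2) := Real.sqrt_le_sqrt (hψb t ht)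
      _ = ε := Real.sqrt_sq hε.le
  · rw [hZ₂]
    simp only
    split_ifs with h
    · rw [mul_zero, h]
    · rw [mul_div_cancel₀ _ (hZ₁ne t h)]


/-- Factorisation with prescribed boundary data: endpoint factorisation `Z_a W_a = ψ(a)` and a
square root `Ẑ² = ψ(b)` extend to a continuous factorisation `Z₁ Z₂ = ψ` bounded by `ε`. -/
theorem stmt_6 (a b : ℝ) (hab : a < b) (ε : ℝ) (hε : 0 < ε) (ψ : ℝ → ℂ)
    (hψc : ContinuousOn ψ (Set.Icc a b))
    (hψb : ∀ t ∈ Set.Icc a b, ‖ψ t‖ ≤ ε ^ 2)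
    (Za Wa Zhat : ℂ)
    (hfa : Za * Wa = ψ a) (hZa : ‖Za‖ ≤ ε) (hWa : ‖Wa‖ ≤ ε)
    (hZhat : Zhat ^ 2 = ψ b) :
    ∃ Z₁ Z₂ : ℝ → ℂ, ContinuousOn Z₁ (Set.Icc a b) ∧ ContinuousOn Z₂ (Set.Icc a b) ∧
      Z₁ a = Za ∧ Z₂ a = Wa ∧ Z₁ b = Zhat ∧ Z₂ b = Zhat ∧
      (∀ t ∈ Set.Icc a b, ‖Z₁ t‖ ≤ ε ∧ ‖Z₂ t‖ ≤ ε ∧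
        Z₁ t * Z₂ t = ψ t) := by
  rcases le_total (‖Wa‖) (‖Za‖) with h | h
  · exact key_fact a b hab ε hε ψ hψc hψb Za Wa Zhat hfa hZa h hZhat
  · obtain ⟨Z₁, Z₂, hc₁, hc₂, ha₁, ha₂, hb₁, hb₂, hpt⟩ :=
      key_fact a b hab ε hε ψ hψc hψb Wa Za Zhat (by rw [mul_comm]; exact hfa) hWa h hZhat
    exact ⟨Z₂, Z₁, hc₂, hc₁, ha₂, ha₁, hb₂, hb₁, fun t ht =>
      ⟨(hpt t ht).2.1, (hpt t ht).1, by rw [mul_comm]; exact (hpt t ht).2.2⟩⟩
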